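/- Hayashi–Nagaoka operator inequality: Let S and T be positive semi-definite operators with S ≤ I, and let c > 0. Then I − (S+T)^{-1/2} S (S+T)^{-1/2} ≤ (1+c)(I − S) + (2 + c + 1/c) T, where (S+T)^{-1/2} denotes the square root of the generalized (Moore–Penrose) inverse of S + T. -/

import Mathlib

open Matrix Kronecker Complex ComplexOrder

noncomputable section

namespace QIT

open scoped Classical

variable {n : Type*} [Fintype n] [DecidableEq n]

/-- Square root of a positive semidefinite matrix (junk value `0` otherwise). -/
def msqrt (A : Matrix n n ℂ) : Matrix n n ℂ :=
  if h : A.PosSemidef then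
    (h.1.eigenvectorUnitary : Matrix n n ℂ) *
      Matrix.diagonal ((↑) ∘ (Real.sqrt ·) ∘ h.1.eigenvalues) *
      (star h.1.eigenvectorUnitary : Matrix n n ℂ)
  else 0

/-- Fidelity `F(ρ,σ) = Tr √(√σ ρ √σ)`. -/
def fid (ρ σ : Matrix n n ℂ) : ℝ :=
  ((msqrt (msqrt σ * ρ * msqrt σ)).trace).re

/-- Purified distance `P(ρ,σ) = √(1 - F(ρ,σ)²)`. -/
def Pdist (ρ σ : Matrix n n ℂ) : ℝ := Real.sqrt (1 - fid ρ σ ^ 2)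

/-- A density operator: positive semidefinite with unit trace. -/
def IsDensity (ρ : Matrix n n ℂ) : Prop := ρ.PosSemidef ∧ ρ.trace = 1

/-- A test (POVM element): `0 ≤ Λ ≤ I`. -/
def IsTest (Λ : Matrix n n ℂ) : Prop := Λ.PosSemidef ∧ (1 - Λ).PosSemidef

/-- Smooth hypothesis testing divergence `D_H^ε(ρ‖σ)` (log base 2). -/
def DH (ε : ℝ) (ρ σ : Matrix n n ℂ) : ℝ :=
  sSup {x : ℝ | ∃ Λ : Matrix n n ℂ, IsTest Λ ∧ (Λ * ρ).trace.re ≥ 1 - ε ∧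
    x = Real.logb 2 (1 / (Λ * σ).trace.re)}

/-- Max-relative entropy `D_max(ρ‖σ)`. -/
def Dmax (ρ σ : Matrix n n ℂ) : ℝ :=
  sInf {l : ℝ | ((((2:ℝ) ^ l : ℝ) : ℂ) • σ - ρ).PosSemidef}

/-- Matrix logarithm (base 2) via the spectral decomposition. -/
def mlog (A : Matrix n n ℂ) : Matrix n n ℂ :=
  if h : A.IsHermitian then
    (h.eigenvectorUnitary : Matrix n n ℂ) *
      Matrix.diagonal (fun i => (Real.logb 2 (h.eigenvalues i) : ℂ)) *
      (h.eigenvectorUnitary : Matrix n n ℂ)ᴴ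
  else 0

/-- Quantum relative entropy `D(ρ‖σ) = Tr ρ (log ρ - log σ)` (log base 2). -/
def Drel (ρ σ : Matrix n n ℂ) : ℝ :=
  ((ρ * mlog ρ).trace - (ρ * mlog σ).trace).re

/-- Square root of the Moore–Penrose inverse, on the support. -/
def pinvSqrt (A : Matrix n n ℂ) : Matrix n n ℂ :=
  if h : A.IsHermitian then
    (h.eigenvectorUnitary : Matrix n n ℂ) *
      Matrix.diagonal (fun i =>
        ((if h.eigenvalues i = 0 then 0 else (Real.sqrt (h.eigenvalues i))⁻¹ : ℝ) : ℂ)) *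
      (h.eigenvectorUnitary : Matrix n n ℂ)ᴴ
  else 0

variable {m : Type*} [Fintype m] [DecidableEq m]

/-- Partial trace over the second tensor factor. -/
def ptraceSnd (ρ : Matrix (n × m) (n × m) ℂ) : Matrix n n ℂ :=
  Matrix.of fun i j => ∑ k, ρ (i, k) (j, k)

/-- Partial trace over the first tensor factor. -/
def ptraceFst (ρ : Matrix (n × m) (n × m) ℂ) : Matrix m m ℂ :=
  Matrix.of fun i j => ∑ k, ρ (k, i) (k, j)


set_option linter.unusedSectionVars false

open scoped MatrixOrder in
/-- square root of a PSD matrix (port helper). -/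
def _root_.Matrix.PosSemidef.sqrt {A : Matrix n n ℂ} (_hA : A.PosSemidef) : Matrix n n ℂ :=
  CFC.sqrt A

open scoped MatrixOrder in
lemma _root_.Matrix.PosSemidef.posSemidef_sqrt {A : Matrix n n ℂ} (hA : A.PosSemidef) :
    hA.sqrt.PosSemidef :=
  (CFC.sqrt_nonneg A).posSemidef

open scoped MatrixOrder in
lemma _root_.Matrix.PosSemidef.sqrt_mul_self {A : Matrix n n ℂ} (hA : A.PosSemidef) :
    hA.sqrt * hA.sqrt = A :=
  CFC.sqrt_mul_sqrt_self A hA.nonneg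

private def hnConj (U : Matrix n n ℂ) (f : n → ℝ) : Matrix n n ℂ :=
  U * diagonal (fun i => (f i : ℂ)) * Uᴴ

private lemma hnConj_mul {U : Matrix n n ℂ} (hU : Uᴴ * U = 1) (f g : n → ℝ) :
    hnConj U f * hnConj U g = hnConj U (fun i => f i * g i) := by
  simp only [hnConj]
  have h1 : (U * diagonal (fun i => (f i : ℂ)) * Uᴴ) * (U * diagonal (fun i => (g i : ℂ)) * Uᴴ)
      = U * diagonal (fun i => (f i : ℂ)) * (Uᴴ * U) * (diagonal (fun i => (g i : ℂ)) * Uᴴ) := by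
    simp only [mul_assoc]
  rw [h1, hU, mul_one]
  have h2 : U * diagonal (fun i => (f i : ℂ)) * (diagonal (fun i => (g i : ℂ)) * Uᴴ)
      = U * (diagonal (fun i => (f i : ℂ)) * diagonal (fun i => (g i : ℂ))) * Uᴴ := by
    simp only [mul_assoc]
  rw [h2, diagonal_mul_diagonal]
  congr 1
  congr 1
  funext i
  push_cast
  rfl

private lemma hnConj_congr {U : Matrix n n ℂ} {f g : n → ℝ} (h : ∀ i, f i = g i) :
    hnConj U f = hnConj U g := by
  have : (fun i => ((f i : ℝ) : ℂ)) = fun i => ((g i : ℝ) : ℂ) := funext fun i => by rw [h i]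
  simp only [hnConj, this]

private lemma hnConj_herm (U : Matrix n n ℂ) (f : n → ℝ) : (hnConj U f)ᴴ = hnConj U f := by
  simp only [hnConj, conjTranspose_mul, conjTranspose_conjTranspose, diagonal_conjTranspose]
  have : star (fun i => (f i : ℂ)) = fun i => (f i : ℂ) := by
    funext i
    simp [Complex.star_def, Complex.conj_ofReal]
  rw [this, mul_assoc]

private lemma hnConj_psd (U : Matrix n n ℂ) (f : n → ℝ) (hf : ∀ i, 0 ≤ f i) :
    (hnConj U f).PosSemidef :=
  PosSemidef.mul_mul_conjTranspose_same
    (PosSemidef.diagonal fun i => Complex.zero_le_real.mpr (hf i)) U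

private lemma hnConj_one (U : Matrix n n ℂ) (hU : U * Uᴴ = 1) :
    hnConj U (fun _ => 1) = 1 := by
  simp only [hnConj]
  have h1 : diagonal (fun _ : n => ((1 : ℝ) : ℂ)) = 1 := by
    push_cast
    exact diagonal_one
  rw [h1, mul_one, hU]

private lemma hnConj_sub (U : Matrix n n ℂ) (f g : n → ℝ) :
    hnConj U f - hnConj U g = hnConj U (fun i => f i - g i) := by
  simp only [hnConj]
  rw [← sub_mul, ← mul_sub, diagonal_sub]
  congr 1
  congr 1
  funext i
  push_cast
  rfl


private lemma hn_smul_psd {A : Matrix n n ℂ} (hA : A.PosSemidef) {r : ℝ} (hr : 0 ≤ r) :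
    ((r : ℂ) • A).PosSemidef := by
  exact hA.smul (Complex.zero_le_real.mpr hr)

private lemma hn_add_eq_zero {R R' : Matrix n n ℂ} (h : Rᴴ * R + R'ᴴ * R' = 0) : R = 0 := by
  have h2 : (fromRows R R')ᴴ * (fromRows R R') = 0 := by
    rw [conjTranspose_fromRows_eq_fromCols_conjTranspose, fromCols_mul_fromRows, h]
  have h3 := conjTranspose_mul_self_eq_zero.mp h2
  ext i j
  simpa using congrFun (congrFun h3 (Sum.inl i)) j

private lemma hn_psd_sub_of_sq {A B : Matrix n n ℂ} (hA : A.PosSemidef) (hB : B.PosSemidef)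
    (h : (A * A - B * B).PosSemidef) : (A - B).PosSemidef := by
  have hD : (A - B).IsHermitian := hA.1.sub hB.1
  refine hD.posSemidef_iff_eigenvalues_nonneg.mpr fun i => ?_
  by_contra hneg
  push_neg at hneg
  set t := hD.eigenvalues i with ht
  set v := ⇑(hD.eigenvectorBasis i) with hv
  have hv0 : v ≠ 0 := by
    have h5 := hD.eigenvectorBasis.orthonormal.ne_zero i
    intro hcon
    apply h5
    ext j
    exact congrFun hcon j
  have hv' : (A - B) *ᵥ v = (t:ℝ) • v := hD.mulVec_eigenvectorBasis i
  have hsv : star v ᵥ* (A - B) = star ((A - B) *ᵥ v) := by rw [star_mulVec, hD]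
  have E : star v ⬝ᵥ (A * A - B * B) *ᵥ v
      = t • (star v ⬝ᵥ A *ᵥ v + star v ⬝ᵥ B *ᵥ v) := by
    calc star v ⬝ᵥ (A * A - B * B) *ᵥ v
        = star v ⬝ᵥ A *ᵥ (A - B) *ᵥ v + star v ⬝ᵥ (A - B) *ᵥ B *ᵥ v := by
          rw [mulVec_mulVec, mulVec_mulVec, ← dotProduct_add, ← add_mulVec, mul_sub, sub_mul,
            add_sub, sub_add_cancel]
      _ = t • (star v ⬝ᵥ A *ᵥ v) + (star v ᵥ* (A - B)) ⬝ᵥ B *ᵥ v := by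
          rw [hv', mulVec_smul, dotProduct_smul, dotProduct_mulVec _ (A - B)]
      _ = t • (star v ⬝ᵥ A *ᵥ v + star v ⬝ᵥ B *ᵥ v) := by
          rw [hsv, hv', star_smul, star_trivial t, smul_dotProduct, smul_add]
  have h0 := h.dotProduct_mulVec_nonneg v
  rw [E, Complex.real_smul] at h0
  have hq : 0 ≤ star v ⬝ᵥ A *ᵥ v + star v ⬝ᵥ B *ᵥ v := add_nonneg (hA.dotProduct_mulVec_nonneg v) (hB.dotProduct_mulVec_nonneg v)
  have htC : (t:ℂ) < 0 := by exact_mod_cast hneg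
  have hsum0 : star v ⬝ᵥ A *ᵥ v + star v ⬝ᵥ B *ᵥ v = 0 := by
    rcases hq.lt_or_eq with hlt | heq
    · have hpos : 0 < -(t:ℂ) * (star v ⬝ᵥ A *ᵥ v + star v ⬝ᵥ B *ᵥ v) :=
        mul_pos (neg_pos.mpr htC) hlt
      rw [neg_mul] at hpos
      exact absurd h0 (neg_pos.mp hpos).not_ge
    · exact heq.symm
  have hqA : star v ⬝ᵥ A *ᵥ v = 0 := by
    have h1 : star v ⬝ᵥ A *ᵥ v = -(star v ⬝ᵥ B *ᵥ v) := eq_neg_of_add_eq_zero_left hsum0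
    refine le_antisymm ?_ (hA.dotProduct_mulVec_nonneg v)
    rw [h1]
    exact neg_nonpos.mpr (hB.dotProduct_mulVec_nonneg v)
  have hqB : star v ⬝ᵥ B *ᵥ v = 0 := by
    rw [hqA, zero_add] at hsum0
    exact hsum0
  have hAv := (hA.dotProduct_mulVec_zero_iff v).mp hqA
  have hBv := (hB.dotProduct_mulVec_zero_iff v).mp hqB
  have : (t:ℝ) • v = 0 := by
    rw [← hv', sub_mulVec, hAv, hBv, sub_zero]
  rcases smul_eq_zero.mp this with h1 | h1
  · exact absurd h1 (ne_of_lt hneg)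
  · exact hv0 h1

private lemma hn_conj_mul (U : Matrix n n ℂ) (hU : Uᴴ * U = 1) (f g : n → ℝ) :
    (U * diagonal (fun i => (f i : ℂ)) * Uᴴ) * (U * diagonal (fun i => (g i : ℂ)) * Uᴴ)
      = U * diagonal (fun i => ((f i * g i : ℝ) : ℂ)) * Uᴴ := by
  have h1 : (U * diagonal (fun i => (f i : ℂ)) * Uᴴ) * (U * diagonal (fun i => (g i : ℂ)) * Uᴴ)
      = U * diagonal (fun i => (f i : ℂ)) * (Uᴴ * U) * (diagonal (fun i => (g i : ℂ)) * Uᴴ) := by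
    simp only [mul_assoc]
  rw [h1, hU, mul_one]
  have h2 : U * diagonal (fun i => (f i : ℂ)) * (diagonal (fun i => (g i : ℂ)) * Uᴴ)
      = U * (diagonal (fun i => (f i : ℂ)) * diagonal (fun i => (g i : ℂ))) * Uᴴ := by
    simp only [mul_assoc]
  rw [h2, diagonal_mul_diagonal]
  congr 1
  congr 1
  funext i
  push_cast
  rfl

private lemma hn_conj_herm (U : Matrix n n ℂ) (f : n → ℝ) :
    (U * diagonal (fun i => (f i : ℂ)) * Uᴴ)ᴴ = U * diagonal (fun i => (f i : ℂ)) * Uᴴ := by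
  simp only [conjTranspose_mul, conjTranspose_conjTranspose, diagonal_conjTranspose]
  have : star (fun i => (f i : ℂ)) = fun i => (f i : ℂ) := by
    funext i
    simp [Complex.star_def, Complex.conj_ofReal]
  rw [this, mul_assoc]

private lemma hn_conj_psd (U : Matrix n n ℂ) (f : n → ℝ) (hf : ∀ i, 0 ≤ f i) :
    (U * diagonal (fun i => (f i : ℂ)) * Uᴴ).PosSemidef := by
  exact PosSemidef.mul_mul_conjTranspose_same
    (PosSemidef.diagonal fun i => Complex.zero_le_real.mpr (hf i)) U

private lemma hn_conj_one (U : Matrix n n ℂ) (hU : U * Uᴴ = 1) :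
    U * diagonal (fun _ : n => ((1 : ℝ) : ℂ)) * Uᴴ = 1 := by
  have h1 : diagonal (fun _ : n => ((1 : ℝ) : ℂ)) = 1 := by
    push_cast
    exact diagonal_one
  rw [h1, mul_one, hU]

private lemma hn_conj_sub (U : Matrix n n ℂ) (f g : n → ℝ) :
    U * diagonal (fun i => (f i : ℂ)) * Uᴴ - U * diagonal (fun i => (g i : ℂ)) * Uᴴ
      = U * diagonal (fun i => ((f i - g i : ℝ) : ℂ)) * Uᴴ := by
  rw [← sub_mul, ← mul_sub, diagonal_sub]
  congr 1
  congr 1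
  funext i
  push_cast
  rfl


/-- Hayashi–Nagaoka operator inequality. -/
theorem statement3 {n : Type*} [Fintype n] [DecidableEq n]
    (S T : Matrix n n ℂ) (hS : S.PosSemidef) (hSI : ((1 : Matrix n n ℂ) - S).PosSemidef)
    (hT : T.PosSemidef) (c : ℝ) (hc : 0 < c) :
    (((1 + c : ℝ) : ℂ) • ((1 : Matrix n n ℂ) - S) + ((2 + c + 1 / c : ℝ) : ℂ) • T -
      ((1 : Matrix n n ℂ) - pinvSqrt (S + T) * S * pinvSqrt (S + T))).PosSemidef := by
  have hN : (S + T).PosSemidef := hS.add hT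
  set d : n → ℝ := hN.1.eigenvalues with hd_def
  set U : Matrix n n ℂ := (hN.1.eigenvectorUnitary : Matrix n n ℂ) with hU_def
  have hd : ∀ i, 0 ≤ d i := hN.eigenvalues_nonneg
  have hU1 : Uᴴ * U = 1 := by
    rw [hU_def, ← star_eq_conjTranspose]
    exact Matrix.mem_unitaryGroup_iff'.mp hN.1.eigenvectorUnitary.2
  have hU2 : U * Uᴴ = 1 := by
    rw [hU_def, ← star_eq_conjTranspose]
    exact Matrix.mem_unitaryGroup_iff.mp hN.1.eigenvectorUnitary.2
  set s : n → ℝ := fun i => Real.sqrt (d i) with hs_def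
  set g : n → ℝ := fun i => if d i = 0 then 0 else (Real.sqrt (d i))⁻¹ with hg_def
  set p : n → ℝ := fun i => if d i = 0 then 0 else 1 with hp_def
  -- pointwise facts
  have hss : ∀ i, s i * s i = d i := fun i => Real.mul_self_sqrt (hd i)
  have hsne : ∀ i, d i ≠ 0 → Real.sqrt (d i) ≠ 0 := fun i h =>
    Real.sqrt_ne_zero'.mpr ((hd i).lt_of_ne' h)
  have hgd : ∀ i, g i * d i = s i := by
    intro i
    by_cases h : d i = 0
    · simp [hg_def, hs_def, h]
    · rw [hg_def, hs_def]
      simp only [h, if_false]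
      rw [inv_mul_eq_div, div_eq_iff (hsne i h)]
      exact (Real.mul_self_sqrt (hd i)).symm
  have hdg : ∀ i, d i * g i = s i := fun i => by rw [mul_comm]; exact hgd i
  have hgs : ∀ i, g i * s i = p i := by
    intro i
    by_cases h : d i = 0
    · simp [hg_def, hp_def, h]
    · rw [hg_def, hs_def, hp_def]
      simp only [h, if_false]
      exact inv_mul_cancel₀ (hsne i h)
  have hsg : ∀ i, s i * g i = p i := fun i => by rw [mul_comm]; exact hgs i
  have hdp : ∀ i, d i * p i = d i := by
    intro i
    by_cases h : d i = 0
    · simp [hp_def, h]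
    · simp [hp_def, h]
  -- matrices
  have hMeq : pinvSqrt (S + T) = hnConj U g := by
    simp only [pinvSqrt, dif_pos hN.1, hnConj]
    rfl
  rw [hMeq]
  set M : Matrix n n ℂ := hnConj U g with hM_def
  set X : Matrix n n ℂ := hnConj U s with hX_def
  set Pm : Matrix n n ℂ := hnConj U p with hPm_def
  have hNcm : S + T = hnConj U d := by
    simp only [hnConj]
    conv_lhs => rw [hN.1.spectral_theorem]
    rw [Unitary.conjStarAlgAut_apply, star_eq_conjTranspose]
    congr 1
  have hMh : Mᴴ = M := by rw [hM_def]; exact hnConj_herm U g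
  have hPmh : Pmᴴ = Pm := by rw [hPm_def]; exact hnConj_herm U p
  have hMN : M * (S + T) = X := by
    rw [hNcm, hM_def, hX_def, hnConj_mul hU1]
    exact hnConj_congr hgd
  have hNM : (S + T) * M = X := by
    rw [hNcm, hM_def, hX_def, hnConj_mul hU1]
    exact hnConj_congr hdg
  have hXM : X * M = Pm := by
    rw [hX_def, hM_def, hPm_def, hnConj_mul hU1]
    exact hnConj_congr hsg
  have hMNM : M * (S + T) * M = Pm := by rw [hMN, hXM]
  have hXX : X * X = S + T := by
    rw [hX_def, hnConj_mul hU1, hNcm]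
    exact hnConj_congr hss
  have hNPm : (S + T) * Pm = S + T := by
    rw [hNcm, hPm_def, hnConj_mul hU1]
    exact hnConj_congr hdp
  -- support absorption
  have hQ0 : (S + T) * ((1 : Matrix n n ℂ) - Pm) = 0 := by
    rw [mul_sub, mul_one, hNPm, sub_self]
  have hQherm : ((1 : Matrix n n ℂ) - Pm)ᴴ = 1 - Pm := by
    rw [conjTranspose_sub, conjTranspose_one, hPmh]
  have hQQ : ((1 : Matrix n n ℂ) - Pm) * ((S + T) * ((1 : Matrix n n ℂ) - Pm)) = 0 := by
    rw [hQ0, mul_zero]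
  have esq : ∀ (A : Matrix n n ℂ) (hA : A.PosSemidef),
      (hA.sqrt * ((1 : Matrix n n ℂ) - Pm))ᴴ * (hA.sqrt * ((1 : Matrix n n ℂ) - Pm))
        = (1 - Pm) * A * (1 - Pm) := by
    intro A hA
    rw [conjTranspose_mul, hQherm, hA.posSemidef_sqrt.1, mul_assoc,
      ← mul_assoc hA.sqrt hA.sqrt, hA.sqrt_mul_self, ← mul_assoc]
  have hsum : (hS.sqrt * ((1 : Matrix n n ℂ) - Pm))ᴴ * (hS.sqrt * ((1 : Matrix n n ℂ) - Pm))
      + (hT.sqrt * ((1 : Matrix n n ℂ) - Pm))ᴴ * (hT.sqrt * ((1 : Matrix n n ℂ) - Pm)) = 0 := by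
    rw [esq S hS, esq T hT]
    have comb : ((1 : Matrix n n ℂ) - Pm) * S * (1 - Pm) + (1 - Pm) * T * (1 - Pm)
        = (1 - Pm) * ((S + T) * (1 - Pm)) := by
      rw [add_mul, mul_add, mul_assoc, mul_assoc]
    rw [comb, hQQ]
  have hRS0 : hS.sqrt * ((1 : Matrix n n ℂ) - Pm) = 0 := hn_add_eq_zero hsum
  have hRT0 : hT.sqrt * ((1 : Matrix n n ℂ) - Pm) = 0 := by
    rw [add_comm] at hsum
    exact hn_add_eq_zero hsum
  have hSQ : S * ((1 : Matrix n n ℂ) - Pm) = 0 := by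
    rw [← hS.sqrt_mul_self, mul_assoc, hRS0, mul_zero]
  have hTQ : T * ((1 : Matrix n n ℂ) - Pm) = 0 := by
    rw [← hT.sqrt_mul_self, mul_assoc, hRT0, mul_zero]
  have hSPm : S * Pm = S := by
    rw [mul_sub, mul_one] at hSQ
    exact (sub_eq_zero.mp hSQ).symm
  have hTPm : T * Pm = T := by
    rw [mul_sub, mul_one] at hTQ
    exact (sub_eq_zero.mp hTQ).symm
  have hPmS : Pm * S = S := by
    have h2 := congrArg conjTranspose hSPm
    rwa [conjTranspose_mul, hPmh, hS.1] at h2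
  have hPmT : Pm * T = T := by
    have h2 := congrArg conjTranspose hTPm
    rwa [conjTranspose_mul, hPmh, hT.1] at h2
  -- X - S is psd
  have hXpsd : X.PosSemidef := by
    rw [hX_def]
    exact hnConj_psd U s fun i => Real.sqrt_nonneg _
  have hVSV : hS.sqrt * S * hS.sqrt = S * S := by
    calc hS.sqrt * S * hS.sqrt
        = hS.sqrt * (hS.sqrt * hS.sqrt) * hS.sqrt := by rw [hS.sqrt_mul_self]
      _ = (hS.sqrt * hS.sqrt) * (hS.sqrt * hS.sqrt) := by simp only [mul_assoc]
      _ = S * S := by rw [hS.sqrt_mul_self]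
  have hv1 : hS.sqrtᴴ * ((1 : Matrix n n ℂ) - S) * hS.sqrt = S - S * S := by
    rw [hS.posSemidef_sqrt.1, mul_sub, mul_one, sub_mul, hS.sqrt_mul_self, hVSV]
  have hdiffeq : X * X - S * S = T + hS.sqrtᴴ * ((1 : Matrix n n ℂ) - S) * hS.sqrt := by
    rw [hv1, hXX]
    abel
  have hdiff : (X * X - S * S).PosSemidef := by
    rw [hdiffeq]
    exact hT.add (hSI.conjTranspose_mul_mul_same hS.sqrt)
  have hXS : (X - S).PosSemidef := hn_psd_sub_of_sq hXpsd hS hdiff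
  -- D1 and pieces
  obtain ⟨D1, hD1_def⟩ : ∃ D1 : Matrix n n ℂ, D1 = M - Pm := ⟨_, rfl⟩
  have hD1h : D1ᴴ = D1 := by rw [hD1_def, conjTranspose_sub, hMh, hPmh]
  have hA2eq : (hS.sqrt * D1)ᴴ * (hS.sqrt * D1) = D1 * S * D1 := by
    rw [conjTranspose_mul, hD1h, hS.posSemidef_sqrt.1, mul_assoc,
      ← mul_assoc hS.sqrt hS.sqrt, hS.sqrt_mul_self, ← mul_assoc]
  have hA2psd : (D1 * S * D1).PosSemidef := hA2eq ▸ posSemidef_conjTranspose_mul_self _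
  have hA3 : ((1 : Matrix n n ℂ) - Pm).PosSemidef := by
    rw [show (1 : Matrix n n ℂ) = hnConj U (fun _ => 1) from (hnConj_one U hU2).symm,
      hPm_def, hnConj_sub]
    refine hnConj_psd U _ fun i => ?_
    by_cases h : d i = 0 <;> simp [hp_def, h]
  -- the square term
  set W : Matrix n n ℂ := hT.sqrt with hW_def
  have hWh : Wᴴ = W := hT.posSemidef_sqrt.1
  have hWW : W * W = T := hT.sqrt_mul_self
  set σ : ℂ := ((Real.sqrt c : ℝ) : ℂ) with hσ_def
  have hσne : σ ≠ 0 := by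
    rw [hσ_def]
    exact_mod_cast (Real.sqrt_ne_zero'.mpr hc)
  have hσσ : σ * σ = ((c : ℝ) : ℂ) := by
    rw [hσ_def, ← Complex.ofReal_mul, Real.mul_self_sqrt hc.le]
  have hσi : σ * σ⁻¹ = 1 := mul_inv_cancel₀ hσne
  have hiσ : σ⁻¹ * σ = 1 := inv_mul_cancel₀ hσne
  have hσii : σ⁻¹ * σ⁻¹ = ((c : ℝ) : ℂ)⁻¹ := by rw [← mul_inv, hσσ]
  have hσs : star σ = σ := by rw [hσ_def]; exact Complex.conj_ofReal _
  have hσis : star σ⁻¹ = σ⁻¹ := by rw [star_inv₀, hσs]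
  obtain ⟨C, hC_def⟩ : ∃ C : Matrix n n ℂ, C = σ • (W * D1) - σ⁻¹ • (W * Pm) := ⟨_, rfl⟩
  have w1 : (D1 * W) * (W * D1) = D1 * T * D1 := by
    rw [mul_assoc, ← mul_assoc W W D1, hWW, ← mul_assoc]
  have w2 : (D1 * W) * (W * Pm) = D1 * T := by
    rw [mul_assoc, ← mul_assoc W W Pm, hWW, hTPm]
  have w3 : (Pm * W) * (W * D1) = T * D1 := by
    rw [mul_assoc, ← mul_assoc W W D1, hWW, ← mul_assoc, hPmT]
  have w4 : (Pm * W) * (W * Pm) = T := by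
    rw [mul_assoc, ← mul_assoc W W Pm, hWW, hTPm, hPmT]
  have hCdag : Cᴴ = σ • (D1 * W) - σ⁻¹ • (Pm * W) := by
    rw [hC_def, conjTranspose_sub, conjTranspose_smul, conjTranspose_smul, conjTranspose_mul,
      conjTranspose_mul, hWh, hD1h, hPmh, hσs, hσis]
  have hE1 : Cᴴ * C = ((c : ℝ) : ℂ) • (D1 * T * D1) + ((c : ℝ) : ℂ)⁻¹ • T - D1 * T - T * D1 := by
    rw [hCdag, hC_def]
    rw [sub_mul, mul_sub, mul_sub]
    simp only [smul_mul_assoc, mul_smul_comm, smul_smul]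
    rw [w1, w2, w3, w4, hσσ, hσi, hiσ, hσii]
    module
  -- absorption helpers
  have hMSPm : M * S * Pm = M * S := by rw [mul_assoc, hSPm]
  have hMTPm : M * T * Pm = M * T := by rw [mul_assoc, hTPm]
  have e1 : D1 * S * D1 = M * S * M - M * S - (S * M - S) := by
    rw [hD1_def]
    simp only [sub_mul, mul_sub, hPmS, hSPm, hMSPm]
    module
  have e2 : D1 * T * D1 = M * T * M - M * T - (T * M - T) := by
    rw [hD1_def]
    simp only [sub_mul, mul_sub, hPmT, hTPm, hMTPm]
    module
  have e3 : D1 * T = M * T - T := by rw [hD1_def, sub_mul, hPmT]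
  have e4 : T * D1 = T * M - T := by rw [hD1_def, mul_sub, hTPm]
  have hX1 : X = M * S + M * T := by rw [← hMN, mul_add]
  have hX2 : X = S * M + T * M := by rw [← hNM, add_mul]
  have hPmMM : Pm = M * S * M + M * T * M := by rw [← hMNM, mul_add, add_mul]
  -- scalars
  have h1c : (0 : ℝ) ≤ 1 + c := by linarith
  -- the key identity
  have key : ((1 + c : ℝ) : ℂ) • ((1 : Matrix n n ℂ) - S) + ((2 + c + 1 / c : ℝ) : ℂ) • T -
      ((1 : Matrix n n ℂ) - M * S * M)
      = (((1 + c : ℝ) : ℂ) • (X - S) + ((1 + c : ℝ) : ℂ) • (X - S)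
        + ((1 + c : ℝ) : ℂ) • (D1 * S * D1) + ((c : ℝ) : ℂ) • ((1 : Matrix n n ℂ) - Pm))
        + Cᴴ * C := by
    rw [hE1, e1, e2, e3, e4]
    nth_rewrite 1 [hX1]
    nth_rewrite 1 [hX2]
    rw [hPmMM]
    push_cast
    module
  rw [key]
  exact ((((hn_smul_psd hXS h1c).add (hn_smul_psd hXS h1c)).add
    (hn_smul_psd hA2psd h1c)).add (hn_smul_psd hA3 hc.le)).add
    (posSemidef_conjTranspose_mul_self C)

end QIT
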